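/- For r ≡ 4 (mod 8), the centralizer of spin(r) = span{e_i e_j : 1 ≤ i < j ≤ r} in the even Clifford algebra Cl_{r+3}^0 is the 8-dimensional span of (1/2)(1 ± e_1···e_r), (1/2)(1 ± e_1···e_r)e_{r+1}e_{r+2}, (1/2)(1 ± e_1···e_r)e_{r+1}e_{r+3}, and (1/2)(1 ± e_1···e_r)e_{r+2}e_{r+3}; this algebra is isomorphic to ℍ ⊕ ℍ. -/

import Mathlib

/-- The negative definite quadratic form on `ℝⁿ`. -/
noncomputable def Qneg (n : ℕ) : QuadraticForm ℝ (Fin n → ℝ) :=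
  QuadraticMap.weightedSumSquares ℝ (fun _ : Fin n => (-1 : ℝ))

/-- The Clifford algebra `Cl_n` with `e_j e_k + e_k e_j = -2 δ_{jk}`. -/
noncomputable abbrev Cl (n : ℕ) := CliffordAlgebra (Qneg n)

/-- The standard generators `e_i` of `Cl_n`. -/
noncomputable def gen (n : ℕ) (i : Fin n) : Cl n :=
  CliffordAlgebra.ι (Qneg n) (Pi.single i 1)

/-- For an index set `I = {i₁ < ⋯ < i_s}`, the basis element `e_I = e_{i₁} ⋯ e_{i_s}`. -/
noncomputable def eProd (n : ℕ) (I : Finset (Fin n)) : Cl n :=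
  ((I.sort (· ≤ ·)).map (gen n)).prod


namespace Aux
open CliffordAlgebra

variable {n : ℕ}

lemma Qneg_apply (v : Fin n → ℝ) : Qneg n v = ∑ k, -(v k * v k) := by
  rw [Qneg, QuadraticMap.weightedSumSquares_apply]
  exact Finset.sum_congr rfl fun k _ => by simp

lemma Qneg_single (i : Fin n) : Qneg n (Pi.single i 1) = -1 := by
  rw [Qneg_apply]
  rw [Finset.sum_eq_single i (fun k _ hk => by simp [Pi.single_eq_of_ne hk])
    (fun h => absurd (Finset.mem_univ i) h)]
  simp

lemma gen_sq (i : Fin n) : gen n i * gen n i = -1 := by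
  rw [gen, ι_sq_scalar, Qneg_single, map_neg, map_one]

lemma single_mul_single {i j : Fin n} (h : i ≠ j) (k : Fin n) :
    (Pi.single i 1 : Fin n → ℝ) k * (Pi.single j 1 : Fin n → ℝ) k = 0 := by
  by_cases hki : k = i <;> by_cases hkj : k = j <;> simp_all [Pi.single_apply]

lemma gen_anticomm {i j : Fin n} (h : i ≠ j) :
    gen n i * gen n j = -(gen n j * gen n i) := by
  have h2 : gen n i * gen n j + gen n j * gen n i =
      algebraMap ℝ _ (QuadraticMap.polar (Qneg n) (Pi.single i 1) (Pi.single j 1)) :=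
    ι_mul_ι_add_swap _ _
  have hp : QuadraticMap.polar (Qneg n) (Pi.single i 1) (Pi.single j 1) = 0 := by
    simp only [QuadraticMap.polar, Qneg_apply, Pi.add_apply]
    rw [← Finset.sum_sub_distrib, ← Finset.sum_sub_distrib]
    refine Finset.sum_eq_zero fun k _ => ?_
    linear_combination (-2 : ℝ) * single_mul_single h k
  rw [hp, map_zero] at h2
  exact eq_neg_of_add_eq_zero_left h2


/-- The linear map that flips the sign of the coordinates in `A`. -/
noncomputable def flipLin (n : ℕ) (A : Finset (Fin n)) : (Fin n → ℝ) →ₗ[ℝ] (Fin n → ℝ) :=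
  LinearMap.pi (fun i => (if i ∈ A then (-1:ℝ) else 1) • LinearMap.proj i)

lemma flipLin_apply (A : Finset (Fin n)) (v : Fin n → ℝ) (i : Fin n) :
    flipLin n A v i = (if i ∈ A then (-1:ℝ) else 1) * v i := rfl

noncomputable def flipIso (n : ℕ) (A : Finset (Fin n)) : Qneg n →qᵢ Qneg n where
  toLinearMap := flipLin n A
  map_app' v := by
    show Qneg n (flipLin n A v) = Qneg n v
    rw [Qneg_apply, Qneg_apply]
    refine Finset.sum_congr rfl fun k _ => ?_
    rw [flipLin_apply]
    by_cases hk : k ∈ A <;> simp [hk] <;> ring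

/-- The sign-flip algebra automorphism of the Clifford algebra. -/
noncomputable def tau (n : ℕ) (A : Finset (Fin n)) : Cl n →ₐ[ℝ] Cl n :=
  CliffordAlgebra.map (flipIso n A)

lemma flipIso_single (A : Finset (Fin n)) (i : Fin n) :
    flipIso n A (Pi.single i 1) = (if i ∈ A then (-1:ℝ) else 1) • (Pi.single i 1 : Fin n → ℝ) := by
  show flipLin n A _ = _
  funext k
  rw [flipLin_apply]
  by_cases hki : k = i
  · subst hki; by_cases hk : k ∈ A <;> simp [hk]
  · simp [Pi.single_eq_of_ne hki]

lemma tau_gen (A : Finset (Fin n)) (i : Fin n) :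
    tau n A (gen n i) = (if i ∈ A then (-1:ℝ) else 1) • gen n i := by
  rw [tau, gen, map_apply_ι, flipIso_single, map_smul]

/-- Product of generators along a list. -/
noncomputable def lp (n : ℕ) (l : List (Fin n)) : Cl n := (l.map (gen n)).prod

lemma lp_nil : lp n [] = 1 := rfl

lemma lp_cons (a : Fin n) (l : List (Fin n)) : lp n (a :: l) = gen n a * lp n l := by
  simp [lp]

lemma eProd_eq_lp (S : Finset (Fin n)) : eProd n S = lp n (S.sort (· ≤ ·)) := rfl

lemma tau_lp (A : Finset (Fin n)) (l : List (Fin n)) :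
    tau n A (lp n l) = ((-1:ℝ) ^ (l.countP (· ∈ A))) • lp n l := by
  induction l with
  | nil => simp [lp_nil]
  | cons a t ih =>
    rw [lp_cons, map_mul, ih, tau_gen, smul_mul_smul_comm, List.countP_cons]
    by_cases ha : a ∈ A <;> simp [ha, pow_succ, mul_comm]


lemma countP_sort (S : Finset (Fin n)) (p : Fin n → Prop) [DecidablePred p] :
    (S.sort (· ≤ ·)).countP (fun a => decide (p a)) = (S.filter p).card := by
  rw [(Finset.sort_perm_toList (s := S) (r := (· ≤ ·))).countP_eq]
  rw [← Multiset.coe_countP,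
    show ((S.toList : List (Fin n)) : Multiset (Fin n)) = S.val from Multiset.coe_toList _,
    Multiset.countP_eq_card_filter]
  rfl

lemma tau_eProd (A S : Finset (Fin n)) :
    tau n A (eProd n S) = ((-1:ℝ) ^ (S ∩ A).card) • eProd n S := by
  rw [eProd_eq_lp, tau_lp, countP_sort S (· ∈ A), Finset.filter_mem_eq_inter]

lemma gen_commute_pair {k i j : Fin n} (hki : k ≠ i) (hkj : k ≠ j) :
    gen n k * (gen n i * gen n j) = (gen n i * gen n j) * gen n k := by
  calc gen n k * (gen n i * gen n j) = (gen n k * gen n i) * gen n j := by rw [mul_assoc]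
    _ = -(gen n i * gen n k) * gen n j := by rw [gen_anticomm hki]
    _ = -(gen n i * (gen n k * gen n j)) := by noncomm_ring
    _ = -(gen n i * -(gen n j * gen n k)) := by rw [gen_anticomm hkj]
    _ = gen n i * gen n j * gen n k := by noncomm_ring

lemma pair_sq {i j : Fin n} (hij : i ≠ j) :
    (gen n i * gen n j) * (gen n i * gen n j) = -1 := by
  calc gen n i * gen n j * (gen n i * gen n j)
      = gen n i * (gen n j * gen n i) * gen n j := by noncomm_ring
    _ = gen n i * -(gen n i * gen n j) * gen n j := by rw [gen_anticomm hij.symm]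
    _ = -(gen n i * gen n i * (gen n j * gen n j)) := by noncomm_ring
    _ = -1 := by rw [gen_sq, gen_sq]; simp

lemma tau_pair_apply {i j : Fin n} (hij : i ≠ j) (x : Cl n) :
    tau n {i,j} x =
      -(gen n i * gen n j * x * (gen n i * gen n j)) := by
  set u := gen n i * gen n j with hu
  have huu : u * u = -1 := pair_sq hij
  let L : Cl n →ₗ[ℝ] Cl n := -((LinearMap.mulLeft ℝ u).comp (LinearMap.mulRight ℝ u))
  have hL : ∀ y : Cl n, L y = -(u * y * u) := fun y => by
    simp [L, LinearMap.mulLeft_apply, LinearMap.mulRight_apply, mul_assoc]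
  have hone : L 1 = 1 := by rw [hL, mul_one, huu]; norm_num
  have hmul : ∀ y z : Cl n, L (y * z) = L y * L z := fun y z => by
    rw [hL, hL, hL, neg_mul_neg]
    have h1 : (u*y*u)*(u*z*u) = u*y*(u*u)*(z*u) := by noncomm_ring
    rw [h1, huu]
    noncomm_ring
  let g : Cl n →ₐ[ℝ] Cl n := AlgHom.ofLinearMap L hone hmul
  have : tau n {i,j} = g := by
    apply CliffordAlgebra.hom_ext
    apply Module.Basis.ext (Pi.basisFun ℝ (Fin n))
    intro k
    simp only [LinearMap.comp_apply, AlgHom.toLinearMap_apply, Pi.basisFun_apply]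
    show tau n {i,j} (gen n k) = g (gen n k)
    have hg : g (gen n k) = -(u * gen n k * u) := hL _
    rw [tau_gen, hg]
    by_cases hki : k = i
    · subst hki
      have h1 : u * gen n k = gen n j := by
        calc u * gen n k = gen n k * (gen n j * gen n k) := by rw [hu]; noncomm_ring
          _ = gen n k * -(gen n k * gen n j) := by rw [gen_anticomm hij.symm]
          _ = -(gen n k * gen n k) * gen n j := by noncomm_ring
          _ = gen n j := by rw [gen_sq]; noncomm_ring
      have h2 : gen n j * u = gen n k := by
        calc gen n j * u = (gen n j * gen n k) * gen n j := by rw [hu]; noncomm_ring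
          _ = -(gen n k * gen n j) * gen n j := by rw [gen_anticomm hij.symm]
          _ = -(gen n k * (gen n j * gen n j)) := by noncomm_ring
          _ = gen n k := by rw [gen_sq]; noncomm_ring
      rw [h1, h2]
      simp [hij]
    · by_cases hkj : k = j
      · subst hkj
        have h1 : u * gen n k = -gen n i := by
          calc u * gen n k = gen n i * (gen n k * gen n k) := by rw [hu]; noncomm_ring
            _ = -gen n i := by rw [gen_sq]; noncomm_ring
        have h2 : (-gen n i) * u = gen n k := by
          calc (-gen n i) * u = -(gen n i * gen n i * gen n k) := by rw [hu]; noncomm_ring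
            _ = gen n k := by rw [gen_sq]; noncomm_ring
        have h3 : u * gen n k * u = gen n k := by rw [h1]; exact h2
        rw [h3]
        simp
      · have hc := gen_commute_pair hki hkj
        have h3 : u * gen n k * u = -gen n k := by
          rw [← hc, mul_assoc, huu]
          simp
        rw [h3]
        simp [hki, hkj]
  rw [this]
  exact hL x


lemma tau_pair_of_commute {i j : Fin n} (hij : i ≠ j) {x : Cl n}
    (h : Commute x (gen n i * gen n j)) : tau n {i,j} x = x := by
  rw [tau_pair_apply hij]
  set u := gen n i * gen n j with hu
  have huu : u * u = -1 := pair_sq hij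
  rw [show u * x = x * u from h.eq.symm, mul_assoc, huu]
  simp

lemma commute_of_tau_pair {i j : Fin n} (hij : i ≠ j) {x : Cl n}
    (h : tau n {i,j} x = x) : Commute x (gen n i * gen n j) := by
  rw [tau_pair_apply hij] at h
  set u := gen n i * gen n j with hu
  have huu : u * u = -1 := pair_sq hij
  show x * u = u * x
  have key : -(u * x * u) * u = u * x := by
    have h1 : -(u * x * u) * u = -(u * x * (u * u)) := by noncomm_ring
    rw [h1, huu]
    simp
  conv_lhs => rw [← h]
  exact key

lemma tau_univ_apply (x : Cl n) : tau n Finset.univ x = CliffordAlgebra.involute x := by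
  have heq : tau n Finset.univ = (CliffordAlgebra.involute : Cl n →ₐ[ℝ] Cl n) := by
    apply CliffordAlgebra.hom_ext
    apply LinearMap.ext; intro m
    simp only [LinearMap.comp_apply, AlgHom.toLinearMap_apply]
    rw [tau, map_apply_ι, involute_ι]
    have hm : (flipIso n Finset.univ) m = -m := by
      funext k
      show flipLin n Finset.univ m k = -m k
      rw [flipLin_apply]; simp
    rw [hm, map_neg]
  rw [heq]

lemma mem_even_iff {x : Cl n} : x ∈ even (Qneg n) ↔ x ∈ evenOdd (Qneg n) 0 := Iff.rfl

lemma lp_even : ∀ (l : List (Fin n)), Even l.length → lp n l ∈ even (Qneg n)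
  | [], _ => by rw [lp_nil]; exact one_mem _
  | [x], h => by simp at h
  | x :: y :: t, h => by
    rw [lp_cons, lp_cons, ← mul_assoc]
    refine mul_mem (mem_even_iff.mpr (ι_mul_ι_mem_evenOdd_zero _ _ _)) (lp_even t ?_)
    rcases h with ⟨m, hm⟩
    simp only [List.length_cons] at hm
    exact ⟨m - 1, by omega⟩

lemma eProd_empty : eProd n ∅ = 1 := by
  rw [eProd, Finset.sort_empty]
  rfl

lemma eProd_insert {a : Fin n} {S : Finset (Fin n)} (h : ∀ b ∈ S, a < b) :
    eProd n (insert a S) = gen n a * eProd n S := by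
  have ha : a ∉ S := fun hmem => lt_irrefl a (h a hmem)
  rw [eProd, Finset.sort_insert (· ≤ ·) (fun b hb => le_of_lt (h b hb)) ha]
  rfl

lemma eProd_singleton (i : Fin n) : eProd n {i} = gen n i := by
  rw [show ({i} : Finset (Fin n)) = insert i ∅ from rfl, eProd_insert (by simp), eProd_empty,
    mul_one]

lemma lp_eq_eProd : ∀ (l : List (Fin n)), l.Pairwise (· < ·) → lp n l = eProd n l.toFinset
  | [], _ => by rw [lp_nil, List.toFinset_nil, eProd_empty]
  | a :: t, h => by
    obtain ⟨h1, h2⟩ := List.pairwise_cons.mp h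
    rw [lp_cons, List.toFinset_cons, lp_eq_eProd t h2,
      eProd_insert (fun b hb => h1 b (List.mem_toFinset.mp hb))]

lemma eProd_union {S T : Finset (Fin n)} (h : ∀ x ∈ S, ∀ y ∈ T, x < y) :
    eProd n (S ∪ T) = eProd n S * eProd n T := by
  have happ : (S.sort (· ≤ ·) ++ T.sort (· ≤ ·)).Pairwise (· < ·) := by
    show List.Pairwise _ _
    exact List.pairwise_append.mpr ⟨(Finset.sortedLT_sort S).pairwise, (Finset.sortedLT_sort T).pairwise,
      fun x hx y hy => h x ((Finset.mem_sort _).mp hx) y ((Finset.mem_sort _).mp hy)⟩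
  have h2 : (S.sort (· ≤ ·) ++ T.sort (· ≤ ·)).toFinset = S ∪ T := by
    rw [List.toFinset_append, Finset.sort_toFinset, Finset.sort_toFinset]
  rw [← h2, ← lp_eq_eProd _ happ, lp, List.map_append, List.prod_append]
  rfl

/-- The span of all `eProd`s. -/
noncomputable def MM (n : ℕ) : Submodule ℝ (Cl n) := Submodule.span ℝ (Set.range (eProd n))

lemma gen_mul_span_above {j : Fin n} {U : Finset (Fin n)} (hj : ∀ x ∈ U, j < x) {y : Cl n}
    (hy : y ∈ Submodule.span ℝ (eProd n '' {T : Finset (Fin n) | T ⊆ U})) :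
    gen n j * y ∈ Submodule.span ℝ (eProd n '' {T : Finset (Fin n) | T ⊆ insert j U}) := by
  induction hy using Submodule.span_induction with
  | mem z hz =>
    obtain ⟨T, hT, rfl⟩ := hz
    rw [← eProd_insert (fun b hb => hj b (hT hb))]
    exact Submodule.subset_span ⟨insert j T, Finset.insert_subset_insert _ hT, rfl⟩
  | zero => rw [mul_zero]; exact Submodule.zero_mem _
  | add y z hy hz ihy ihz => rw [mul_add]; exact Submodule.add_mem _ ihy ihz
  | smul c y hy ihy => rw [mul_smul_comm]; exact Submodule.smul_mem _ _ ihy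

lemma gen_mul_lp_mem (i : Fin n) :
    ∀ (l : List (Fin n)), l.Pairwise (· < ·) →
      gen n i * lp n l ∈
        Submodule.span ℝ (eProd n '' {T : Finset (Fin n) | T ⊆ insert i l.toFinset})
  | [], _ => by
    rw [lp_nil, mul_one, ← eProd_singleton]
    exact Submodule.subset_span ⟨{i}, by simp, rfl⟩
  | a :: t, h => by
    obtain ⟨h1, h2⟩ := List.pairwise_cons.mp h
    rcases lt_trichotomy i a with hia | rfl | hai
    · have hs : (i :: a :: t).Pairwise (· < ·) := by
        refine List.pairwise_cons.mpr ⟨?_, h⟩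
        intro b hb
        rcases List.mem_cons.mp hb with rfl | hb
        · exact hia
        · exact lt_trans hia (h1 b hb)
      rw [show gen n i * lp n (a :: t) = lp n (i :: a :: t) from (lp_cons _ _).symm,
        lp_eq_eProd _ hs]
      refine Submodule.subset_span ⟨(i :: a :: t).toFinset, ?_, rfl⟩
      simp only [Set.mem_setOf_eq, List.toFinset_cons]
      exact subset_rfl
    · rw [lp_cons, ← mul_assoc, gen_sq, lp_eq_eProd t h2, neg_one_mul]
      refine Submodule.neg_mem _ (Submodule.subset_span ⟨t.toFinset, ?_, rfl⟩)
      intro x hx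
      exact Finset.mem_insert_of_mem (by rw [List.toFinset_cons]; exact Finset.mem_insert_of_mem hx)
    · have h3 : gen n i * lp n (a :: t) = -(gen n a * (gen n i * lp n t)) := by
        rw [lp_cons, ← mul_assoc, gen_anticomm (ne_of_gt hai)]
        noncomm_ring
      rw [h3]
      refine Submodule.neg_mem _ ?_
      have hrec := gen_mul_lp_mem i t h2
      have hja : ∀ x ∈ insert i t.toFinset, a < x := by
        intro x hx
        rcases Finset.mem_insert.mp hx with rfl | hx
        · exact hai
        · exact h1 x (List.mem_toFinset.mp hx)
      have hstep := gen_mul_span_above hja hrec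
      refine Submodule.span_mono ?_ hstep
      apply Set.image_mono
      intro T hT
      simp only [Set.mem_setOf_eq] at hT ⊢
      rw [List.toFinset_cons, Finset.insert_comm]
      exact hT

lemma gen_mul_mem (i : Fin n) {x : Cl n} (hx : x ∈ MM n) : gen n i * x ∈ MM n := by
  induction hx using Submodule.span_induction with
  | mem z hz =>
    obtain ⟨S, rfl⟩ := hz
    have hmem := gen_mul_lp_mem i (S.sort (· ≤ ·)) ((Finset.sortedLT_sort S).pairwise)
    rw [← eProd_eq_lp] at hmem
    refine Submodule.span_mono ?_ hmem
    rintro _ ⟨T, -, rfl⟩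
    exact ⟨T, rfl⟩
  | zero => rw [mul_zero]; exact Submodule.zero_mem _
  | add y z hy hz ihy ihz => rw [mul_add]; exact Submodule.add_mem _ ihy ihz
  | smul c y hy ihy => rw [mul_smul_comm]; exact Submodule.smul_mem _ _ ihy

lemma lp_mul_mem : ∀ (l : List (Fin n)) {x : Cl n}, x ∈ MM n → lp n l * x ∈ MM n
  | [], x, hx => by rw [lp_nil, one_mul]; exact hx
  | a :: t, x, hx => by rw [lp_cons, mul_assoc]; exact gen_mul_mem a (lp_mul_mem t hx)

lemma mul_mem_MM {x y : Cl n} (hx : x ∈ MM n) (hy : y ∈ MM n) : x * y ∈ MM n := by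
  induction hx using Submodule.span_induction with
  | mem z hz =>
    obtain ⟨S, rfl⟩ := hz
    rw [eProd_eq_lp]
    exact lp_mul_mem _ hy
  | zero => rw [zero_mul]; exact Submodule.zero_mem _
  | add u z hu hz ihu ihz => rw [add_mul]; exact Submodule.add_mem _ ihu ihz
  | smul c u hu ihu => rw [smul_mul_assoc]; exact Submodule.smul_mem _ _ ihu

lemma mem_MM (x : Cl n) : x ∈ MM n := by
  induction x using CliffordAlgebra.induction with
  | algebraMap r =>
    rw [Algebra.algebraMap_eq_smul_one]
    exact Submodule.smul_mem _ _ (Submodule.subset_span ⟨∅, eProd_empty⟩)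
  | ι v =>
    have hv : v = ∑ i, v i • (Pi.single i 1 : Fin n → ℝ) := by
      funext k
      simp [Finset.sum_apply, Pi.single_apply]
    rw [hv, map_sum]
    refine Submodule.sum_mem _ fun i _ => ?_
    rw [map_smul]
    exact Submodule.smul_mem _ _ (Submodule.subset_span ⟨{i}, (eProd_singleton i).symm ▸ rfl⟩)
  | mul x y hx hy => exact mul_mem_MM hx hy
  | add x y hx hy => exact Submodule.add_mem _ hx hy


/-- Averaging operator for the involution `tau A`. -/
noncomputable def avg (n : ℕ) (A : Finset (Fin n)) : Module.End ℝ (Cl n) :=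
  (2:ℝ)⁻¹ • ((1 : Module.End ℝ (Cl n)) + (tau n A).toLinearMap)

lemma avg_apply (A : Finset (Fin n)) (x : Cl n) :
    avg n A x = (2:ℝ)⁻¹ • (x + tau n A x) := by
  simp [avg, LinearMap.add_apply]

lemma avg_fixed {A : Finset (Fin n)} {x : Cl n} (h : tau n A x = x) : avg n A x = x := by
  rw [avg_apply, h, ← two_smul ℝ x, smul_smul]
  norm_num

lemma avg_eProd_even {A S : Finset (Fin n)} (h : Even (S ∩ A).card) :
    avg n A (eProd n S) = eProd n S := by
  apply avg_fixed
  rw [tau_eProd, h.neg_one_pow, one_smul]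

lemma avg_eProd_odd {A S : Finset (Fin n)} (h : ¬ Even (S ∩ A).card) :
    avg n A (eProd n S) = 0 := by
  rw [avg_apply, tau_eProd, (Nat.not_even_iff_odd.mp h).neg_one_pow, neg_one_smul,
    add_neg_cancel, smul_zero]

lemma prodAvg_fixed : ∀ (L : List (Finset (Fin n))) {x : Cl n},
    (∀ A ∈ L, tau n A x = x) → ((L.map (avg n)).prod) x = x
  | [], x, _ => rfl
  | A :: t, x, h => by
    rw [List.map_cons, List.prod_cons, Module.End.mul_apply,
      prodAvg_fixed t (fun B hB => h B (List.mem_cons_of_mem _ hB)),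
      avg_fixed (h A (List.mem_cons_self))]

lemma prodAvg_eProd (S : Finset (Fin n)) : ∀ (L : List (Finset (Fin n))),
    (((L.map (avg n)).prod) (eProd n S) = eProd n S ∧ (∀ A ∈ L, Even (S ∩ A).card)) ∨
    ((L.map (avg n)).prod) (eProd n S) = 0
  | [] => Or.inl ⟨rfl, by simp⟩
  | A :: t => by
    rw [List.map_cons, List.prod_cons, Module.End.mul_apply]
    rcases prodAvg_eProd S t with ⟨he, hall⟩ | h0
    · rw [he]
      by_cases hA : Even (S ∩ A).card
      · refine Or.inl ⟨avg_eProd_even hA, fun B hB => ?_⟩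
        rcases List.mem_cons.mp hB with rfl | hB
        · exact hA
        · exact hall B hB
      · exact Or.inr (avg_eProd_odd hA)
    · rw [h0, map_zero]
      exact Or.inr rfl

lemma lp_mul_gen_of_not_mem {a : Fin n} : ∀ (l : List (Fin n)), a ∉ l →
    lp n l * gen n a = ((-1:ℝ)^l.length) • (gen n a * lp n l)
  | [], _ => by simp [lp_nil]
  | b :: t, ha => by
    have hba : b ≠ a := fun h => ha (h ▸ List.mem_cons_self)
    rw [lp_cons, mul_assoc, lp_mul_gen_of_not_mem t (fun h => ha (List.mem_cons_of_mem _ h)),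
      mul_smul_comm, ← mul_assoc, gen_anticomm hba, List.length_cons, pow_succ,
      neg_mul, mul_assoc, smul_neg, mul_neg_one, neg_smul]

lemma lp_sq : ∀ (l : List (Fin n)), l.Nodup →
    lp n l * lp n l = ((-1:ℝ)^(l.length * (l.length + 1) / 2)) • 1
  | [], _ => by simp [lp_nil]
  | a :: t, hnd => by
    obtain ⟨ha, ht⟩ := List.nodup_cons.mp hnd
    have key : lp n (a::t) * lp n (a::t) =
        ((-1:ℝ)^t.length) • ((gen n a * gen n a) * (lp n t * lp n t)) := by
      rw [lp_cons]
      calc gen n a * lp n t * (gen n a * lp n t)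
          = gen n a * (lp n t * gen n a) * lp n t := by noncomm_ring
        _ = gen n a * (((-1:ℝ)^t.length) • (gen n a * lp n t)) * lp n t := by
            rw [lp_mul_gen_of_not_mem t ha]
        _ = ((-1:ℝ)^t.length) • ((gen n a * gen n a) * (lp n t * lp n t)) := by
            rw [mul_smul_comm, smul_mul_assoc]
            congr 1
            noncomm_ring
    rw [key, gen_sq, lp_sq t ht]
    have harith : (t.length + 1) * ((t.length + 1) + 1) / 2
        = t.length * (t.length + 1) / 2 + (t.length + 1) := by
      obtain ⟨k, hk⟩ := Nat.even_mul_succ_self t.length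
      have e1 : (t.length+1)*((t.length+1)+1) = t.length*(t.length+1) + 2*(t.length+1) := by ring
      omega
    rw [List.length_cons, harith, pow_add]
    rw [neg_one_mul, smul_neg, smul_smul, ← neg_smul]
    congr 1
    ring

end Aux

namespace Main
open Aux CliffordAlgebra

variable (r : ℕ)

noncomputable def er0 : Fin (r+3) := ⟨r, by simp⟩
noncomputable def er1 : Fin (r+3) := ⟨r+1, by simp⟩
noncomputable def er2 : Fin (r+3) := ⟨r+2, by simp⟩
def Sw : Finset (Fin (r+3)) := Finset.univ.filter (fun i => (i:ℕ) < r)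
noncomputable def w : Cl (r+3) := eProd (r+3) (Sw r)
noncomputable def aa : Cl (r+3) := gen (r+3) (er0 r) * gen (r+3) (er1 r)
noncomputable def bb : Cl (r+3) := gen (r+3) (er0 r) * gen (r+3) (er2 r)
noncomputable def cc : Cl (r+3) := gen (r+3) (er1 r) * gen (r+3) (er2 r)
noncomputable def pp : Cl (r+3) := (2:ℝ)⁻¹ • (1 + w r)
noncomputable def qq : Cl (r+3) := (2:ℝ)⁻¹ • (1 - w r)

lemma er01 : er0 r ≠ er1 r := Fin.ne_of_val_ne (by simp [er0, er1])
lemma er02 : er0 r ≠ er2 r := Fin.ne_of_val_ne (by simp [er0, er2])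
lemma er12 : er1 r ≠ er2 r := Fin.ne_of_val_ne (by simp [er1, er2])

lemma card_Sw : (Sw r).card = r := by
  have himg : (Sw r).image Fin.val = Finset.range r := by
    ext x
    simp only [Sw, Finset.mem_image, Finset.mem_filter, Finset.mem_univ, true_and,
      Finset.mem_range]
    constructor
    · rintro ⟨i, hi, rfl⟩; exact hi
    · intro hx; exact ⟨⟨x, by omega⟩, hx, rfl⟩
  have h2 := Finset.card_image_of_injective (Sw r) Fin.val_injective
  rw [himg, Finset.card_range] at h2
  exact h2.symm

lemma w_sq (hr : r % 8 = 4) : w r * w r = 1 := by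
  rw [w, eProd_eq_lp, lp_sq _ (Finset.sort_nodup _ _), Finset.length_sort, card_Sw]
  obtain ⟨k, hk⟩ : ∃ k, r = 8*k+4 := ⟨r/8, by omega⟩
  have harith : r*(r+1)/2 = 2*((2*k+1)*(8*k+5)) := by
    have e1 : r*(r+1) = 2*(2*((2*k+1)*(8*k+5))) := by subst hk; ring
    omega
  rw [harith, pow_mul]
  norm_num

lemma aa_sq : aa r * aa r = -1 := pair_sq (er01 r)
lemma bb_sq : bb r * bb r = -1 := pair_sq (er02 r)
lemma cc_sq : cc r * cc r = -1 := pair_sq (er12 r)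

lemma aa_mul_bb : aa r * bb r = cc r := by
  rw [aa, bb, cc]
  set g0 := gen (r+3) (er0 r)
  set g1 := gen (r+3) (er1 r)
  set g2 := gen (r+3) (er2 r)
  have h1 : g1 * g0 = -(g0 * g1) := gen_anticomm (er01 r).symm
  calc g0 * g1 * (g0 * g2) = g0 * (g1 * g0) * g2 := by noncomm_ring
    _ = g0 * -(g0 * g1) * g2 := by rw [h1]
    _ = -((g0 * g0) * (g1 * g2)) := by noncomm_ring
    _ = g1 * g2 := by rw [gen_sq]; noncomm_ring

lemma bb_mul_aa : bb r * aa r = -(cc r) := by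
  rw [aa, bb, cc]
  set g0 := gen (r+3) (er0 r)
  set g1 := gen (r+3) (er1 r)
  set g2 := gen (r+3) (er2 r)
  have h1 : g2 * g0 = -(g0 * g2) := gen_anticomm (er02 r).symm
  have h2 : g2 * g1 = -(g1 * g2) := gen_anticomm (er12 r).symm
  calc g0 * g2 * (g0 * g1) = g0 * (g2 * g0) * g1 := by noncomm_ring
    _ = g0 * -(g0 * g2) * g1 := by rw [h1]
    _ = -((g0 * g0) * (g2 * g1)) := by noncomm_ring
    _ = g2 * g1 := by rw [gen_sq]; noncomm_ring
    _ = -(g1 * g2) := h2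


lemma Sw_inter_pair_lt {i j : Fin (r+3)} (hij : i ≠ j) (hi : (i:ℕ) < r) (hj : (j:ℕ) < r) :
    (Sw r ∩ ({i, j} : Finset (Fin (r+3)))).card = 2 := by
  rw [Finset.inter_eq_right.mpr]
  · exact Finset.card_pair hij
  · intro x hx
    rcases Finset.mem_insert.mp hx with rfl | hx
    · simp [Sw, hi]
    · rw [Finset.mem_singleton.mp hx] at *
      simp [Sw, hj]

lemma Sw_inter_pair_ge {i j : Fin (r+3)} (hi : r ≤ (i:ℕ)) (hj : r ≤ (j:ℕ)) :
    (Sw r ∩ ({i, j} : Finset (Fin (r+3)))).card = 0 := by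
  rw [Finset.card_eq_zero]
  ext z
  simp only [Finset.mem_inter, Finset.mem_filter, Finset.mem_insert, Finset.mem_singleton, Sw,
    Finset.mem_univ, true_and, Finset.notMem_empty, iff_false, not_and]
  rintro hz (rfl | rfl) <;> omega

lemma commute_w_pair_lt {i j : Fin (r+3)} (hij : i ≠ j) (hi : (i:ℕ) < r) (hj : (j:ℕ) < r) :
    Commute (w r) (gen (r+3) i * gen (r+3) j) := by
  apply commute_of_tau_pair hij
  rw [w, tau_eProd, Sw_inter_pair_lt r hij hi hj]
  norm_num

lemma commute_w_pair_ge {i j : Fin (r+3)} (hij : i ≠ j) (hi : r ≤ (i:ℕ)) (hj : r ≤ (j:ℕ)) :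
    Commute (w r) (gen (r+3) i * gen (r+3) j) := by
  apply commute_of_tau_pair hij
  rw [w, tau_eProd, Sw_inter_pair_ge r hi hj]
  norm_num

lemma commute_w_aa : Commute (w r) (aa r) := by
  rw [aa]; exact commute_w_pair_ge r (er01 r) (by simp [er0]) (by simp [er1])

lemma commute_w_bb : Commute (w r) (bb r) := by
  rw [bb]; exact commute_w_pair_ge r (er02 r) (by simp [er0]) (by simp [er2])

lemma commute_w_cc : Commute (w r) (cc r) := by
  rw [cc]; exact commute_w_pair_ge r (er12 r) (by simp [er1]) (by simp [er2])

lemma commute_gen_pair' {m : ℕ} {k i j : Fin m} (hki : k ≠ i) (hkj : k ≠ j) :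
    Commute (gen m k) (gen m i * gen m j) := gen_commute_pair hki hkj

lemma commute_abc_pair {i j : Fin (r+3)} (hi : (i:ℕ) < r) (hj : (j:ℕ) < r) :
    Commute (aa r) (gen (r+3) i * gen (r+3) j) ∧
    Commute (bb r) (gen (r+3) i * gen (r+3) j) ∧
    Commute (cc r) (gen (r+3) i * gen (r+3) j) := by
  have h0i : er0 r ≠ i := Fin.ne_of_val_ne (by simp [er0]; omega)
  have h0j : er0 r ≠ j := Fin.ne_of_val_ne (by simp [er0]; omega)
  have h1i : er1 r ≠ i := Fin.ne_of_val_ne (by simp [er1]; omega)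
  have h1j : er1 r ≠ j := Fin.ne_of_val_ne (by simp [er1]; omega)
  have h2i : er2 r ≠ i := Fin.ne_of_val_ne (by simp [er2]; omega)
  have h2j : er2 r ≠ j := Fin.ne_of_val_ne (by simp [er2]; omega)
  exact ⟨(commute_gen_pair' h0i h0j).mul_left (commute_gen_pair' h1i h1j),
    (commute_gen_pair' h0i h0j).mul_left (commute_gen_pair' h2i h2j),
    (commute_gen_pair' h1i h1j).mul_left (commute_gen_pair' h2i h2j)⟩

lemma w_even (hr : r % 8 = 4) : w r ∈ even (Qneg (r+3)) := by
  rw [w, eProd_eq_lp]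
  apply lp_even
  rw [Finset.length_sort, card_Sw]
  exact ⟨r/2, by omega⟩

lemma aa_even : aa r ∈ even (Qneg (r+3)) :=
  mem_even_iff.mpr (ι_mul_ι_mem_evenOdd_zero _ _ _)
lemma bb_even : bb r ∈ even (Qneg (r+3)) :=
  mem_even_iff.mpr (ι_mul_ι_mem_evenOdd_zero _ _ _)
lemma cc_even : cc r ∈ even (Qneg (r+3)) :=
  mem_even_iff.mpr (ι_mul_ι_mem_evenOdd_zero _ _ _)

lemma pp_add_qq : pp r + qq r = 1 := by
  rw [pp, qq]; module

lemma pp_sub_qq : pp r - qq r = w r := by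
  rw [pp, qq]; module

lemma pp_mul_pp (hr : r % 8 = 4) : pp r * pp r = pp r := by
  rw [pp, smul_mul_smul_comm]
  have h1 : (1 + w r) * (1 + w r) = (2:ℝ) • (1 + w r) := by
    rw [mul_add, add_mul, add_mul, w_sq r hr]
    simp only [one_mul, mul_one]
    module
  rw [h1, smul_smul]
  norm_num

lemma qq_mul_qq (hr : r % 8 = 4) : qq r * qq r = qq r := by
  rw [qq, smul_mul_smul_comm]
  have h1 : (1 - w r) * (1 - w r) = (2:ℝ) • (1 - w r) := by
    rw [mul_sub, sub_mul, sub_mul, w_sq r hr]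
    simp only [one_mul, mul_one]
    module
  rw [h1, smul_smul]
  norm_num

lemma pp_mul_qq (hr : r % 8 = 4) : pp r * qq r = 0 := by
  rw [pp, qq, smul_mul_smul_comm]
  have h1 : (1 + w r) * (1 - w r) = 0 := by
    rw [mul_sub, add_mul, add_mul, w_sq r hr]
    simp only [one_mul, mul_one]
    module
  rw [h1, smul_zero]

lemma qq_mul_pp (hr : r % 8 = 4) : qq r * pp r = 0 := by
  rw [pp, qq, smul_mul_smul_comm]
  have h1 : (1 - w r) * (1 + w r) = 0 := by
    rw [mul_add, sub_mul, sub_mul, w_sq r hr]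
    simp only [one_mul, mul_one]
    module
  rw [h1, smul_zero]

lemma commute_pp {y : Cl (r+3)} (hy : Commute (w r) y) : Commute (pp r) y := by
  rw [pp]
  exact (Commute.add_left (Commute.one_left y) hy).smul_left _

lemma commute_qq {y : Cl (r+3)} (hy : Commute (w r) y) : Commute (qq r) y := by
  rw [qq]
  exact (Commute.sub_left (Commute.one_left y) hy).smul_left _


noncomputable def SS : Set (Cl (r+3)) :=
  {pp r, qq r, pp r * aa r, qq r * aa r, pp r * bb r, qq r * bb r, pp r * cc r, qq r * cc r}

lemma mem_SS_1 : pp r ∈ SS r := Set.mem_insert _ _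
lemma mem_SS_2 : qq r ∈ SS r := Set.mem_insert_of_mem _ (Set.mem_insert _ _)
lemma mem_SS_3 : pp r * aa r ∈ SS r :=
  Set.mem_insert_of_mem _ (Set.mem_insert_of_mem _ (Set.mem_insert _ _))
lemma mem_SS_4 : qq r * aa r ∈ SS r :=
  Set.mem_insert_of_mem _ (Set.mem_insert_of_mem _ (Set.mem_insert_of_mem _ (Set.mem_insert _ _)))
lemma mem_SS_5 : pp r * bb r ∈ SS r :=
  Set.mem_insert_of_mem _ (Set.mem_insert_of_mem _ (Set.mem_insert_of_mem _
    (Set.mem_insert_of_mem _ (Set.mem_insert _ _))))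
lemma mem_SS_6 : qq r * bb r ∈ SS r :=
  Set.mem_insert_of_mem _ (Set.mem_insert_of_mem _ (Set.mem_insert_of_mem _
    (Set.mem_insert_of_mem _ (Set.mem_insert_of_mem _ (Set.mem_insert _ _)))))
lemma mem_SS_7 : pp r * cc r ∈ SS r :=
  Set.mem_insert_of_mem _ (Set.mem_insert_of_mem _ (Set.mem_insert_of_mem _
    (Set.mem_insert_of_mem _ (Set.mem_insert_of_mem _ (Set.mem_insert_of_mem _
      (Set.mem_insert _ _))))))
lemma mem_SS_8 : qq r * cc r ∈ SS r :=
  Set.mem_insert_of_mem _ (Set.mem_insert_of_mem _ (Set.mem_insert_of_mem _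
    (Set.mem_insert_of_mem _ (Set.mem_insert_of_mem _ (Set.mem_insert_of_mem _
      (Set.mem_insert_of_mem _ rfl))))))

lemma one_mem_span : (1 : Cl (r+3)) ∈ Submodule.span ℝ (SS r) := by
  rw [← pp_add_qq r]
  exact Submodule.add_mem _ (Submodule.subset_span (mem_SS_1 r))
    (Submodule.subset_span (mem_SS_2 r))

lemma w_mem_span : w r ∈ Submodule.span ℝ (SS r) := by
  rw [← pp_sub_qq r]
  exact Submodule.sub_mem _ (Submodule.subset_span (mem_SS_1 r))
    (Submodule.subset_span (mem_SS_2 r))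

lemma aa_mem_span : aa r ∈ Submodule.span ℝ (SS r) := by
  rw [show aa r = pp r * aa r + qq r * aa r by rw [← add_mul, pp_add_qq, one_mul]]
  exact Submodule.add_mem _ (Submodule.subset_span (mem_SS_3 r))
    (Submodule.subset_span (mem_SS_4 r))

lemma bb_mem_span : bb r ∈ Submodule.span ℝ (SS r) := by
  rw [show bb r = pp r * bb r + qq r * bb r by rw [← add_mul, pp_add_qq, one_mul]]
  exact Submodule.add_mem _ (Submodule.subset_span (mem_SS_5 r))
    (Submodule.subset_span (mem_SS_6 r))

lemma cc_mem_span : cc r ∈ Submodule.span ℝ (SS r) := by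
  rw [show cc r = pp r * cc r + qq r * cc r by rw [← add_mul, pp_add_qq, one_mul]]
  exact Submodule.add_mem _ (Submodule.subset_span (mem_SS_7 r))
    (Submodule.subset_span (mem_SS_8 r))

lemma w_aa_mem_span : w r * aa r ∈ Submodule.span ℝ (SS r) := by
  rw [show w r * aa r = pp r * aa r - qq r * aa r by rw [← sub_mul, pp_sub_qq]]
  exact Submodule.sub_mem _ (Submodule.subset_span (mem_SS_3 r))
    (Submodule.subset_span (mem_SS_4 r))

lemma w_bb_mem_span : w r * bb r ∈ Submodule.span ℝ (SS r) := by
  rw [show w r * bb r = pp r * bb r - qq r * bb r by rw [← sub_mul, pp_sub_qq]]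
  exact Submodule.sub_mem _ (Submodule.subset_span (mem_SS_5 r))
    (Submodule.subset_span (mem_SS_6 r))

lemma w_cc_mem_span : w r * cc r ∈ Submodule.span ℝ (SS r) := by
  rw [show w r * cc r = pp r * cc r - qq r * cc r by rw [← sub_mul, pp_sub_qq]]
  exact Submodule.sub_mem _ (Submodule.subset_span (mem_SS_7 r))
    (Submodule.subset_span (mem_SS_8 r))

lemma lt01 : er0 r < er1 r := by simp [Fin.lt_def, er0, er1]
lemma lt02 : er0 r < er2 r := by simp [Fin.lt_def, er0, er2]
lemma lt12 : er1 r < er2 r := by simp [Fin.lt_def, er1, er2]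

lemma eProd_pair_aa : eProd (r+3) {er0 r, er1 r} = aa r := by
  rw [show ({er0 r, er1 r} : Finset (Fin (r+3))) = insert (er0 r) {er1 r} from rfl,
    eProd_insert (fun b hb => by rw [Finset.mem_singleton.mp hb]; exact lt01 r),
    eProd_singleton, aa]

lemma eProd_pair_bb : eProd (r+3) {er0 r, er2 r} = bb r := by
  rw [show ({er0 r, er2 r} : Finset (Fin (r+3))) = insert (er0 r) {er2 r} from rfl,
    eProd_insert (fun b hb => by rw [Finset.mem_singleton.mp hb]; exact lt02 r),
    eProd_singleton, bb]

lemma eProd_pair_cc : eProd (r+3) {er1 r, er2 r} = cc r := by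
  rw [show ({er1 r, er2 r} : Finset (Fin (r+3))) = insert (er1 r) {er2 r} from rfl,
    eProd_insert (fun b hb => by rw [Finset.mem_singleton.mp hb]; exact lt12 r),
    eProd_singleton, cc]

lemma eProd_SwU (T : Finset (Fin (r+3))) (hT : ∀ y ∈ T, r ≤ (y:ℕ)) :
    eProd (r+3) (Sw r ∪ T) = w r * eProd (r+3) T := by
  rw [w]
  refine eProd_union fun x hx y hy => ?_
  have hx' : (x:ℕ) < r := (Finset.mem_filter.mp hx).2
  exact Fin.lt_def.mpr (lt_of_lt_of_le hx' (hT y hy))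

def i0 : Fin (r+3) := ⟨0, by omega⟩

noncomputable def Lav : List (Finset (Fin (r+3))) :=
  (Finset.univ : Finset (Fin (r+3))) ::
    (List.finRange (r-1)).map
      (fun k => ({i0 r, ⟨k.val+1, by have := k.isLt; omega⟩} : Finset (Fin (r+3))))

lemma even_inter_pair {α : Type*} [DecidableEq α] {S : Finset α} {x y : α} (hxy : x ≠ y)
    (h : Even (S ∩ ({x, y} : Finset α)).card) : (x ∈ S ↔ y ∈ S) := by
  constructor
  · intro hx
    by_contra hy
    have he : S ∩ ({x, y} : Finset α) = {x} := by
      ext z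
      simp only [Finset.mem_inter, Finset.mem_insert, Finset.mem_singleton]
      constructor
      · rintro ⟨hz, rfl | rfl⟩
        · rfl
        · exact absurd hz hy
      · rintro rfl
        exact ⟨hx, Or.inl rfl⟩
    rw [he, Finset.card_singleton] at h
    exact Nat.not_even_one h
  · intro hy
    by_contra hx
    have he : S ∩ ({x, y} : Finset α) = {y} := by
      ext z
      simp only [Finset.mem_inter, Finset.mem_insert, Finset.mem_singleton]
      constructor
      · rintro ⟨hz, rfl | rfl⟩
        · exact absurd hz hx
        · rfl
      · rintro rfl
        exact ⟨hy, Or.inr rfl⟩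
    rw [he, Finset.card_singleton] at h
    exact Nat.not_even_one h

lemma SH_cases (S : Finset (Fin (r+3))) {T : Finset (Fin (r+3))}
    (hT : T = ({er0 r, er1 r, er2 r} : Finset (Fin (r+3))).filter (· ∈ S))
    (hcard : Even T.card) :
    eProd (r+3) T ∈ Submodule.span ℝ (SS r) ∧
      w r * eProd (r+3) T ∈ Submodule.span ℝ (SS r) := by
  by_cases h0 : er0 r ∈ S <;> by_cases h1 : er1 r ∈ S <;> by_cases h2 : er2 r ∈ S <;>
    simp only [Finset.filter_insert, Finset.filter_singleton, h0, h1, h2, if_true, if_false,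
      ite_true, ite_false, Finset.insert_empty] at hT
  · rw [hT] at hcard
    rw [Finset.card_insert_of_notMem (by simp [er01 r, er02 r]),
      Finset.card_insert_of_notMem (by simp [er12 r]), Finset.card_singleton,
      Nat.even_iff] at hcard
    omega
  · rw [hT, eProd_pair_aa]
    exact ⟨aa_mem_span r, w_aa_mem_span r⟩
  · rw [hT, eProd_pair_bb]
    exact ⟨bb_mem_span r, w_bb_mem_span r⟩
  · rw [hT, Finset.card_singleton] at hcard
    exact absurd hcard Nat.not_even_one
  · rw [hT, eProd_pair_cc]
    exact ⟨cc_mem_span r, w_cc_mem_span r⟩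
  · rw [hT, Finset.card_singleton] at hcard
    exact absurd hcard Nat.not_even_one
  · rw [hT, Finset.card_singleton] at hcard
    exact absurd hcard Nat.not_even_one
  · rw [hT, eProd_empty]
    exact ⟨one_mem_span r, by rw [mul_one]; exact w_mem_span r⟩


lemma classify (hr : r % 8 = 4) (S : Finset (Fin (r+3)))
    (hall : ∀ A ∈ Lav r, Even ((S ∩ A).card)) :
    eProd (r+3) S ∈ Submodule.span ℝ (SS r) := by
  have hr4 : 4 ≤ r := by omega
  have heven : Even S.card := by
    have h := hall Finset.univ (List.mem_cons_self)
    rwa [Finset.inter_univ] at h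
  have hpair : ∀ j : ℕ, (hj1 : 1 ≤ j) → (hj2 : j < r) →
      (i0 r ∈ S ↔ (⟨j, by omega⟩ : Fin (r+3)) ∈ S) := by
    intro j hj1 hj2
    have hmem : ({i0 r, (⟨j, by omega⟩ : Fin (r+3))} : Finset (Fin (r+3))) ∈ Lav r := by
      refine List.mem_cons_of_mem _ (List.mem_map.mpr
        ⟨⟨j-1, by omega⟩, List.mem_finRange _, ?_⟩)
      have : j - 1 + 1 = j := by omega
      simp only [this]
    have hne : i0 r ≠ (⟨j, by omega⟩ : Fin (r+3)) := Fin.ne_of_val_ne (by simp [i0]; omega)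
    exact even_inter_pair hne (hall _ hmem)
  have hdecomp := Finset.filter_union_filter_not_eq (fun i : Fin (r+3) => (i:ℕ) < r) S
  set SL := S.filter (fun i : Fin (r+3) => (i:ℕ) < r) with hSL
  set SH := S.filter (fun i : Fin (r+3) => ¬ (i:ℕ) < r) with hSHdef
  have hSHsub : ∀ y ∈ SH, r ≤ (y:ℕ) := fun y hy => by
    have := (Finset.mem_filter.mp hy).2; omega
  have hSHf : SH = ({er0 r, er1 r, er2 r} : Finset (Fin (r+3))).filter (· ∈ S) := by
    ext z
    simp only [hSHdef, Finset.mem_filter, Finset.mem_insert, Finset.mem_singleton]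
    constructor
    · rintro ⟨hz, hge⟩
      have hv : (z:ℕ) = r ∨ (z:ℕ) = r+1 ∨ (z:ℕ) = r+2 := by have := z.isLt; omega
      refine ⟨?_, hz⟩
      rcases hv with h|h|h
      · exact Or.inl (Fin.ext h)
      · exact Or.inr (Or.inl (Fin.ext h))
      · exact Or.inr (Or.inr (Fin.ext h))
    · rintro ⟨hz1, hz2⟩
      refine ⟨hz2, ?_⟩
      rcases hz1 with rfl|rfl|rfl <;> simp [er0, er1, er2]
  by_cases h0 : i0 r ∈ S
  · have hSLw : SL = Sw r := by
      ext z
      simp only [hSL, Finset.mem_filter, Sw, Finset.mem_univ, true_and]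
      constructor
      · rintro ⟨_, hz⟩; exact hz
      · intro hz
        refine ⟨?_, hz⟩
        by_cases hz0 : (z:ℕ) = 0
        · rwa [show z = i0 r from Fin.ext (by simp [i0, hz0])]
        · rw [show z = (⟨(z:ℕ), by omega⟩ : Fin (r+3)) from Fin.ext rfl]
          exact (hpair (z:ℕ) (by omega) hz).mp h0
    have hcardSH : Even SH.card := by
      have hc : SL.card + SH.card = S.card :=
        Finset.card_filter_add_card_filter_not (s := S) (p := fun i : Fin (r+3) => (i:ℕ) < r)
      rw [hSLw, card_Sw] at hc
      rcases heven with ⟨m, hm⟩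
      exact ⟨m - r/2, by omega⟩
    have hS : S = Sw r ∪ SH := by rw [← hdecomp, hSLw]
    rw [hS, eProd_SwU r SH hSHsub]
    exact (SH_cases r S hSHf hcardSH).2
  · have hSLe : SL = ∅ := by
      ext z
      simp only [hSL, Finset.mem_filter, Finset.notMem_empty, iff_false, not_and]
      intro hz hlt
      by_cases hz0 : (z:ℕ) = 0
      · exact h0 (by rwa [show i0 r = z from Fin.ext (by simp [i0, hz0])])
      · refine h0 ((hpair (z:ℕ) (by omega) hlt).mpr ?_)
        rwa [show (⟨(z:ℕ), by omega⟩ : Fin (r+3)) = z from Fin.ext rfl]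
    have hcardSH : Even SH.card := by
      have hc : SL.card + SH.card = S.card :=
        Finset.card_filter_add_card_filter_not (s := S) (p := fun i : Fin (r+3) => (i:ℕ) < r)
      rw [hSLe, Finset.card_empty] at hc
      rw [← hc, zero_add] at heven
      exact heven
    have hS : S = SH := by rw [← hdecomp, hSLe, Finset.empty_union]
    rw [hS]
    exact (SH_cases r S hSHf hcardSH).1


lemma pp_even (hr : r % 8 = 4) : pp r ∈ even (Qneg (r+3)) := by
  rw [pp]
  exact Subalgebra.smul_mem _ (add_mem (one_mem _) (w_even r hr)) _

lemma qq_even (hr : r % 8 = 4) : qq r ∈ even (Qneg (r+3)) := by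
  rw [qq]
  exact Subalgebra.smul_mem _ (sub_mem (one_mem _) (w_even r hr)) _

lemma backward (hr : r % 8 = 4) {x : Cl (r+3)} (hx : x ∈ Submodule.span ℝ (SS r)) :
    x ∈ even (Qneg (r+3)) ∧
      ∀ i j : Fin (r+3), (i:ℕ) < r → (j:ℕ) < r → i < j →
        Commute x (gen (r+3) i * gen (r+3) j) := by
  induction hx using Submodule.span_induction with
  | mem z hz =>
    have hcp : ∀ i j : Fin (r+3), (i:ℕ) < r → (j:ℕ) < r → i < j →
        Commute (pp r) (gen (r+3) i * gen (r+3) j) := fun i j hi hj hij =>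
      commute_pp r (commute_w_pair_lt r (ne_of_lt hij) hi hj)
    have hcq : ∀ i j : Fin (r+3), (i:ℕ) < r → (j:ℕ) < r → i < j →
        Commute (qq r) (gen (r+3) i * gen (r+3) j) := fun i j hi hj hij =>
      commute_qq r (commute_w_pair_lt r (ne_of_lt hij) hi hj)
    simp only [SS, Set.mem_insert_iff, Set.mem_singleton_iff] at hz
    rcases hz with rfl|rfl|rfl|rfl|rfl|rfl|rfl|rfl
    · exact ⟨pp_even r hr, hcp⟩
    · exact ⟨qq_even r hr, hcq⟩
    · exact ⟨mul_mem (pp_even r hr) (aa_even r), fun i j hi hj hij =>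
        (hcp i j hi hj hij).mul_left (commute_abc_pair r hi hj).1⟩
    · exact ⟨mul_mem (qq_even r hr) (aa_even r), fun i j hi hj hij =>
        (hcq i j hi hj hij).mul_left (commute_abc_pair r hi hj).1⟩
    · exact ⟨mul_mem (pp_even r hr) (bb_even r), fun i j hi hj hij =>
        (hcp i j hi hj hij).mul_left (commute_abc_pair r hi hj).2.1⟩
    · exact ⟨mul_mem (qq_even r hr) (bb_even r), fun i j hi hj hij =>
        (hcq i j hi hj hij).mul_left (commute_abc_pair r hi hj).2.1⟩
    · exact ⟨mul_mem (pp_even r hr) (cc_even r), fun i j hi hj hij =>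
        (hcp i j hi hj hij).mul_left (commute_abc_pair r hi hj).2.2⟩
    · exact ⟨mul_mem (qq_even r hr) (cc_even r), fun i j hi hj hij =>
        (hcq i j hi hj hij).mul_left (commute_abc_pair r hi hj).2.2⟩
  | zero => exact ⟨zero_mem _, fun i j _ _ _ => Commute.zero_left _⟩
  | add u v hu hv ihu ihv =>
    exact ⟨add_mem ihu.1 ihv.1, fun i j hi hj hij =>
      (ihu.2 i j hi hj hij).add_left (ihv.2 i j hi hj hij)⟩
  | smul c u hu ihu =>
    exact ⟨Subalgebra.smul_mem _ ihu.1 _, fun i j hi hj hij =>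
      (ihu.2 i j hi hj hij).smul_left c⟩

lemma forward (hr : r % 8 = 4) {x : Cl (r+3)} (hxe : x ∈ even (Qneg (r+3)))
    (hxc : ∀ i j : Fin (r+3), (i:ℕ) < r → (j:ℕ) < r → i < j →
      Commute x (gen (r+3) i * gen (r+3) j)) :
    x ∈ Submodule.span ℝ (SS r) := by
  have hfix : (((Lav r).map (avg (r+3))).prod) x = x := by
    apply prodAvg_fixed
    intro A hA
    rcases List.mem_cons.mp hA with rfl | hA
    · rw [tau_univ_apply]
      exact involute_eq_of_mem_even (mem_even_iff.mp hxe)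
    · obtain ⟨k, -, rfl⟩ := List.mem_map.mp hA
      have hne : i0 r ≠ (⟨k.val+1, by have := k.isLt; omega⟩ : Fin (r+3)) :=
        Fin.ne_of_val_ne (by simp [i0])
      apply tau_pair_of_commute hne
      exact hxc _ _ (by simp [i0]; omega) (by simp; have := k.isLt; omega)
        (by simp [Fin.lt_def, i0])
  have hP : ∀ y, y ∈ MM (r+3) →
      (((Lav r).map (avg (r+3))).prod) y ∈ Submodule.span ℝ (SS r) := by
    intro y hy
    induction hy using Submodule.span_induction with
    | mem z hz =>
      obtain ⟨T, rfl⟩ := hz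
      rcases prodAvg_eProd T (Lav r) with ⟨heq, hall⟩ | h0
      · rw [heq]
        exact classify r hr T hall
      · rw [h0]; exact zero_mem _
    | zero => rw [map_zero]; exact zero_mem _
    | add u v hu hv ihu ihv => rw [map_add]; exact add_mem ihu ihv
    | smul c u hu ihu => rw [map_smul]; exact Submodule.smul_mem _ _ ihu
  rw [← hfix]
  exact hP x (mem_MM x)


lemma cl_nontrivial : Nontrivial (Cl (r+3)) := inferInstance

lemma tau_w_single (hr : r % 8 = 4) : tau (r+3) {i0 r} (w r) = -(w r) := by
  rw [w, tau_eProd]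
  have h1 : (Sw r ∩ ({i0 r} : Finset (Fin (r+3)))).card = 1 := by
    rw [Finset.inter_eq_right.mpr]
    · exact Finset.card_singleton _
    · intro x hx
      rw [Finset.mem_singleton.mp hx]
      simp only [Sw, Finset.mem_filter, Finset.mem_univ, true_and, i0]
      omega
  rw [h1, pow_one, neg_one_smul]

lemma neg_one_ne_one : ¬ ((-1 : Cl (r+3)) = 1) := by
  intro h2
  have h5 : (2:ℝ) • (1 : Cl (r+3)) = 0 := by
    rw [two_smul]
    nth_rewrite 1 [← h2]
    rw [neg_add_cancel]
  have h4 : (1 : Cl (r+3)) = 0 := by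
    calc (1 : Cl (r+3)) = (2:ℝ)⁻¹ • ((2:ℝ) • (1 : Cl (r+3))) := by rw [smul_smul]; norm_num
      _ = 0 := by rw [h5, smul_zero]
  exact one_ne_zero h4

lemma pp_ne_zero (hr : r % 8 = 4) : pp r ≠ 0 := by
  intro h
  rw [pp] at h
  have h1 : (1 : Cl (r+3)) + w r = 0 := by
    have h2 := congrArg (fun z : Cl (r+3) => (2:ℝ) • z) h
    simpa [smul_smul] using h2
  have hw : w r = -1 := by
    have := eq_neg_of_add_eq_zero_right h1
    exact this
  have h2 := tau_w_single r hr
  rw [hw, map_neg, map_one, neg_neg] at h2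
  exact neg_one_ne_one r h2

lemma qq_ne_zero (hr : r % 8 = 4) : qq r ≠ 0 := by
  intro h
  rw [qq] at h
  have h1 : (1 : Cl (r+3)) - w r = 0 := by
    have h2 := congrArg (fun z : Cl (r+3) => (2:ℝ) • z) h
    simpa [smul_smul] using h2
  have hw : w r = 1 := (sub_eq_zero.mp h1).symm
  have h2 := tau_w_single r hr
  rw [hw, map_one] at h2
  exact neg_one_ne_one r h2.symm

noncomputable def quatBasis : QuaternionAlgebra.Basis (Cl (r+3)) (-1:ℝ) (0:ℝ) (-1:ℝ) where
  i := aa r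
  j := bb r
  k := cc r
  i_mul_i := by rw [aa_sq r, neg_smul, one_smul, zero_smul, add_zero]
  j_mul_j := by rw [bb_sq r, neg_smul, one_smul]
  i_mul_j := aa_mul_bb r
  j_mul_i := by rw [bb_mul_aa r, zero_smul, zero_sub]

noncomputable def phi : Quaternion ℝ →ₐ[ℝ] Cl (r+3) := (quatBasis r).liftHom

lemma phi_apply (x : Quaternion ℝ) :
    phi r x = algebraMap ℝ _ x.re + x.imI • aa r + x.imJ • bb r + x.imK • cc r := rfl

lemma commute_pp_phi (x : Quaternion ℝ) : Commute (pp r) (phi r x) := by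
  rw [phi_apply]
  refine Commute.add_right (Commute.add_right (Commute.add_right ?_ ?_) ?_) ?_
  · exact Algebra.commute_algebraMap_right _ _
  · exact ((commute_pp r (commute_w_aa r))).smul_right _
  · exact ((commute_pp r (commute_w_bb r))).smul_right _
  · exact ((commute_pp r (commute_w_cc r))).smul_right _

lemma commute_qq_phi (x : Quaternion ℝ) : Commute (qq r) (phi r x) := by
  rw [phi_apply]
  refine Commute.add_right (Commute.add_right (Commute.add_right ?_ ?_) ?_) ?_
  · exact Algebra.commute_algebraMap_right _ _
  · exact ((commute_qq r (commute_w_aa r))).smul_right _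
  · exact ((commute_qq r (commute_w_bb r))).smul_right _
  · exact ((commute_qq r (commute_w_cc r))).smul_right _

lemma key_mul (hr : r % 8 = 4) (x y x' y' : Quaternion ℝ) :
    (pp r * phi r x + qq r * phi r y) * (pp r * phi r x' + qq r * phi r y') =
      pp r * phi r (x * x') + qq r * phi r (y * y') := by
  have c1 : Commute (phi r x) (pp r) := (commute_pp_phi r x).symm
  have c2 : Commute (phi r x) (qq r) := (commute_qq_phi r x).symm
  have c3 : Commute (phi r y) (pp r) := (commute_pp_phi r y).symm
  have c4 : Commute (phi r y) (qq r) := (commute_qq_phi r y).symm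
  rw [add_mul, mul_add, mul_add, c1.mul_mul_mul_comm, c2.mul_mul_mul_comm,
    c3.mul_mul_mul_comm, c4.mul_mul_mul_comm, pp_mul_pp r hr, pp_mul_qq r hr,
    qq_mul_pp r hr, qq_mul_qq r hr, zero_mul, zero_mul, map_mul, map_mul]
  abel

noncomputable def fQ (hr : r % 8 = 4) : (Quaternion ℝ × Quaternion ℝ) →ₐ[ℝ] Cl (r+3) :=
  AlgHom.mk'
    { toFun := fun z => pp r * phi r z.1 + qq r * phi r z.2
      map_one' := by
        show pp r * phi r 1 + qq r * phi r 1 = 1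
        rw [map_one, mul_one, mul_one, pp_add_qq]
      map_mul' := fun z zw => by
        exact (key_mul r hr z.1 z.2 zw.1 zw.2).symm
      map_zero' := by
        show pp r * phi r 0 + qq r * phi r 0 = 0
        rw [map_zero, mul_zero, mul_zero, add_zero]
      map_add' := fun z zw => by
        show pp r * phi r (z.1 + zw.1) + qq r * phi r (z.2 + zw.2) = _
        rw [map_add, map_add, mul_add, mul_add]
        abel }
    (fun c z => by
      show pp r * phi r (c • z.1) + qq r * phi r (c • z.2) =
        c • (pp r * phi r z.1 + qq r * phi r z.2)
      rw [map_smul, map_smul, mul_smul_comm, mul_smul_comm, smul_add])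

lemma fQ_apply (hr : r % 8 = 4) (z : Quaternion ℝ × Quaternion ℝ) :
    fQ r hr z = pp r * phi r z.1 + qq r * phi r z.2 := rfl

lemma fQ_inj (hr : r % 8 = 4) : Function.Injective (fQ r hr) := by
  rw [injective_iff_map_eq_zero]
  intro z hz
  obtain ⟨x, y⟩ := z
  rw [fQ_apply] at hz
  have hx0 : pp r * phi r x = 0 := by
    have h2 := congrArg (fun t => pp r * t) hz
    simp only [mul_zero] at h2
    rw [mul_add, ← mul_assoc, ← mul_assoc, pp_mul_pp r hr, pp_mul_qq r hr, zero_mul,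
      add_zero] at h2
    exact h2
  have hy0 : qq r * phi r y = 0 := by
    have h2 := congrArg (fun t => qq r * t) hz
    simp only [mul_zero] at h2
    rw [mul_add, ← mul_assoc, ← mul_assoc, qq_mul_pp r hr, qq_mul_qq r hr, zero_mul,
      zero_add] at h2
    exact h2
  have hx : x = 0 := by
    by_contra hne
    refine pp_ne_zero r hr ?_
    have h1 : pp r * phi r (x * x⁻¹) = 0 := by
      rw [map_mul, ← mul_assoc, hx0, zero_mul]
    rwa [mul_inv_cancel₀ hne, map_one, mul_one] at h1
  have hy : y = 0 := by
    by_contra hne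
    refine qq_ne_zero r hr ?_
    have h1 : qq r * phi r (y * y⁻¹) = 0 := by
      rw [map_mul, ← mul_assoc, hy0, zero_mul]
    rwa [mul_inv_cancel₀ hne, map_one, mul_one] at h1
  rw [hx, hy]
  rfl

lemma pp_phi_mem (hr : r % 8 = 4) (x : Quaternion ℝ) :
    pp r * phi r x ∈ Submodule.span ℝ (SS r) := by
  rw [phi_apply, mul_add, mul_add, mul_add, mul_smul_comm, mul_smul_comm, mul_smul_comm,
    ← Algebra.commutes, ← Algebra.smul_def]
  refine add_mem (add_mem (add_mem ?_ ?_) ?_) ?_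
  · exact Submodule.smul_mem _ _ (Submodule.subset_span (mem_SS_1 r))
  · exact Submodule.smul_mem _ _ (Submodule.subset_span (mem_SS_3 r))
  · exact Submodule.smul_mem _ _ (Submodule.subset_span (mem_SS_5 r))
  · exact Submodule.smul_mem _ _ (Submodule.subset_span (mem_SS_7 r))

lemma qq_phi_mem (hr : r % 8 = 4) (x : Quaternion ℝ) :
    qq r * phi r x ∈ Submodule.span ℝ (SS r) := by
  rw [phi_apply, mul_add, mul_add, mul_add, mul_smul_comm, mul_smul_comm, mul_smul_comm,
    ← Algebra.commutes, ← Algebra.smul_def]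
  refine add_mem (add_mem (add_mem ?_ ?_) ?_) ?_
  · exact Submodule.smul_mem _ _ (Submodule.subset_span (mem_SS_2 r))
  · exact Submodule.smul_mem _ _ (Submodule.subset_span (mem_SS_4 r))
  · exact Submodule.smul_mem _ _ (Submodule.subset_span (mem_SS_6 r))
  · exact Submodule.smul_mem _ _ (Submodule.subset_span (mem_SS_8 r))

lemma phi_i : phi r (⟨0,1,0,0⟩ : Quaternion ℝ) = aa r := by
  refine (phi_apply r _).trans ?_
  simp

lemma phi_j : phi r (⟨0,0,1,0⟩ : Quaternion ℝ) = bb r := by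
  refine (phi_apply r _).trans ?_
  simp

lemma phi_k : phi r (⟨0,0,0,1⟩ : Quaternion ℝ) = cc r := by
  refine (phi_apply r _).trans ?_
  simp

lemma fQ_range (hr : r % 8 = 4) :
    Set.range (fQ r hr) = (Submodule.span ℝ (SS r) : Set (Cl (r+3))) := by
  apply Set.Subset.antisymm
  · rintro _ ⟨z, rfl⟩
    rw [fQ_apply]
    exact add_mem (pp_phi_mem r hr z.1) (qq_phi_mem r hr z.2)
  · have hle : Submodule.span ℝ (SS r) ≤ LinearMap.range (fQ r hr).toLinearMap := by
      rw [Submodule.span_le]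
      intro t ht
      simp only [SS, Set.mem_insert_iff, Set.mem_singleton_iff] at ht
      rcases ht with rfl|rfl|rfl|rfl|rfl|rfl|rfl|rfl
      · exact ⟨(1, 0), by rw [AlgHom.toLinearMap_apply, fQ_apply, map_one, map_zero,
          mul_one, mul_zero, add_zero]⟩
      · exact ⟨(0, 1), by rw [AlgHom.toLinearMap_apply, fQ_apply, map_one, map_zero,
          mul_one, mul_zero, zero_add]⟩
      · exact ⟨(⟨0,1,0,0⟩, 0), by rw [AlgHom.toLinearMap_apply, fQ_apply, map_zero,
          mul_zero, add_zero, phi_i]⟩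
      · exact ⟨(0, ⟨0,1,0,0⟩), by rw [AlgHom.toLinearMap_apply, fQ_apply, map_zero,
          mul_zero, zero_add, phi_i]⟩
      · exact ⟨(⟨0,0,1,0⟩, 0), by rw [AlgHom.toLinearMap_apply, fQ_apply, map_zero,
          mul_zero, add_zero, phi_j]⟩
      · exact ⟨(0, ⟨0,0,1,0⟩), by rw [AlgHom.toLinearMap_apply, fQ_apply, map_zero,
          mul_zero, zero_add, phi_j]⟩
      · exact ⟨(⟨0,0,0,1⟩, 0), by rw [AlgHom.toLinearMap_apply, fQ_apply, map_zero,
          mul_zero, add_zero, phi_k]⟩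
      · exact ⟨(0, ⟨0,0,0,1⟩), by rw [AlgHom.toLinearMap_apply, fQ_apply, map_zero,
          mul_zero, zero_add, phi_k]⟩
    intro t ht
    obtain ⟨z, hz⟩ := hle ht
    exact ⟨z, hz⟩

end Main

/-- For `r ≡ 4 (mod 8)`, the centralizer of `spin(r)` in the even Clifford algebra
`Cl_{r+3}⁰` is the 8-dimensional span of `(1 ± ω)/2`, `(1 ± ω)/2·e_{r+1}e_{r+2}`,
`(1 ± ω)/2·e_{r+1}e_{r+3}` and `(1 ± ω)/2·e_{r+2}e_{r+3}` (with `ω = e₁⋯e_r`), and this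
algebra is isomorphic to `ℍ ⊕ ℍ`. -/
theorem stmt8 (r : ℕ) (hr : r % 8 = 4) :
    let n := r + 3
    let ω : Cl n := eProd n (Finset.univ.filter fun i => (i : ℕ) < r)
    let p : Cl n := (2 : ℝ)⁻¹ • (1 + ω)
    let q : Cl n := (2 : ℝ)⁻¹ • (1 - ω)
    let a : Cl n := gen n ⟨r, by omega⟩ * gen n ⟨r + 1, by omega⟩
    let b : Cl n := gen n ⟨r, by omega⟩ * gen n ⟨r + 2, by omega⟩
    let c : Cl n := gen n ⟨r + 1, by omega⟩ * gen n ⟨r + 2, by omega⟩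
    let S : Set (Cl n) := {p, q, p * a, q * a, p * b, q * b, p * c, q * c}
    ({x : Cl n | x ∈ CliffordAlgebra.even (Qneg n) ∧
        ∀ i j : Fin n, (i : ℕ) < r → (j : ℕ) < r → i < j →
          Commute x (gen n i * gen n j)} =
      (Submodule.span ℝ S : Set (Cl n))) ∧
    ∃ f : (Quaternion ℝ × Quaternion ℝ) →ₐ[ℝ] Cl n, Function.Injective f ∧
      Set.range f = (Submodule.span ℝ S : Set (Cl n)) := by
  intro n ω p q a b c S
  have hSeq : S = Main.SS r := rfl
  constructor
  · ext x
    simp only [Set.mem_setOf_eq, SetLike.mem_coe]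
    rw [hSeq]
    constructor
    · rintro ⟨hxe, hxc⟩
      exact Main.forward r hr hxe hxc
    · intro hx
      exact ⟨(Main.backward r hr hx).1, (Main.backward r hr hx).2⟩
  · refine ⟨Main.fQ r hr, Main.fQ_inj r hr, ?_⟩
    rw [hSeq]
    exact Main.fQ_range r hr
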